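/- The subgroup Sp(2n, ℚ) of rational symplectic matrices is dense in the real symplectic group Sp(2n, ℝ). -/

import Mathlib

open Matrix Filter Topology

namespace SympDense

variable {n : ℕ}

abbrev Idx (n : ℕ) := Fin n ⊕ Fin n

abbrev Mat (n : ℕ) := Matrix (Idx n) (Idx n) ℝ

def Jm (n : ℕ) : Mat n := Matrix.fromBlocks 0 1 (-1) 0

lemma Jm_transpose : (Jm n)ᵀ = -(Jm n) := by
  ext i j
  rcases i with i | i <;> rcases j with j | j <;>
    simp [Jm, Matrix.transpose_apply, Matrix.one_apply, eq_comm]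

lemma Jm_sq : Jm n * Jm n = -1 := by
  rw [Jm, fromBlocks_multiply]
  simp only [Matrix.zero_mul, Matrix.neg_mul, zero_add, neg_zero, Matrix.one_mul,
    add_zero, Matrix.mul_zero, Matrix.mul_one, Matrix.mul_neg, zero_mul]
  rw [← neg_zero, ← Matrix.fromBlocks_neg, ← fromBlocks_one]

def symp (n : ℕ) : Set (Mat n) := {M | Mᵀ * Jm n * M = Jm n}

def ratSymp (n : ℕ) : Set (Mat n) :=
  {M | M ∈ symp n ∧ ∀ i j, ∃ q : ℚ, M i j = (q : ℝ)}

lemma symp_mul {M N : Mat n} (hM : M ∈ symp n) (hN : N ∈ symp n) : M * N ∈ symp n := by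
  show (M * N)ᵀ * Jm n * (M * N) = Jm n
  have h1 : (M * N)ᵀ * Jm n * (M * N) = Nᵀ * (Mᵀ * Jm n * M) * N := by
    rw [transpose_mul]; noncomm_ring
  rw [h1, hM, hN]

def ratSympMon (n : ℕ) : Submonoid (Mat n) where
  carrier := ratSymp n
  one_mem' := by
    constructor
    · show (1 : Mat n)ᵀ * Jm n * 1 = Jm n
      simp
    · intro i j
      refine ⟨if i = j then 1 else 0, ?_⟩
      rw [Matrix.one_apply]
      split <;> simp
  mul_mem' := by
    rintro a b ⟨ha, hqa⟩ ⟨hb, hqb⟩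
    refine ⟨symp_mul ha hb, ?_⟩
    choose qa hqa using hqa
    choose qb hqb using hqb
    intro i j
    refine ⟨∑ k, qa i k * qb k j, ?_⟩
    rw [Matrix.mul_apply]
    push_cast
    exact Finset.sum_congr rfl fun k _ => by rw [hqa, hqb]

lemma closure_mul {a b : Mat n} (ha : a ∈ closure (ratSymp n))
    (hb : b ∈ closure (ratSymp n)) : a * b ∈ closure (ratSymp n) := by
  have h := Submonoid.mul_mem ((ratSympMon n).topologicalClosure)
    (show a ∈ (ratSympMon n).topologicalClosure from ha)
    (show b ∈ (ratSympMon n).topologicalClosure from hb)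
  exact h

lemma symp_isClosed : IsClosed (symp n) := by
  have h : symp n = (fun M : Mat n => Mᵀ * Jm n * M) ⁻¹' {Jm n} := rfl
  rw [h]
  exact isClosed_singleton.preimage
    (((continuous_id.matrix_transpose).matrix_mul continuous_const).matrix_mul continuous_id)

lemma cayley_symp {A : Mat n} (hA : Aᵀ * Jm n + Jm n * A = 0)
    (h : IsUnit (1 + A).det) : (1 - A) * (1 + A)⁻¹ ∈ symp n := by
  have h2 : Aᵀ * Jm n = -(Jm n * A) := eq_neg_of_add_eq_zero_left hA
  have key : (1 - A)ᵀ * Jm n * (1 - A) = (1 + A)ᵀ * Jm n * (1 + A) := by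
    simp only [transpose_sub, transpose_add, transpose_one, Matrix.sub_mul, Matrix.mul_sub,
      Matrix.add_mul, Matrix.mul_add, Matrix.one_mul, Matrix.mul_one, h2, Matrix.neg_mul,
      Matrix.mul_neg]
    abel
  have hdt : IsUnit (1 + A)ᵀ.det := by rwa [det_transpose]
  show ((1 - A) * (1 + A)⁻¹)ᵀ * Jm n * ((1 - A) * (1 + A)⁻¹) = Jm n
  calc ((1 - A) * (1 + A)⁻¹)ᵀ * Jm n * ((1 - A) * (1 + A)⁻¹)
      = (1 + A)⁻¹ᵀ * ((1 - A)ᵀ * Jm n * (1 - A)) * (1 + A)⁻¹ := by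
        rw [transpose_mul]; noncomm_ring
    _ = (1 + A)⁻¹ᵀ * ((1 + A)ᵀ * Jm n * (1 + A)) * (1 + A)⁻¹ := by rw [key]
    _ = ((1 + A)ᵀ⁻¹ * (1 + A)ᵀ) * Jm n * ((1 + A) * (1 + A)⁻¹) := by
        rw [Matrix.transpose_nonsing_inv]; noncomm_ring
    _ = Jm n := by
        rw [Matrix.nonsing_inv_mul _ hdt, Matrix.mul_nonsing_inv _ h, Matrix.one_mul,
          Matrix.mul_one]

noncomputable def Phi (n : ℕ) : Matrix (Idx n) (Idx n) ℚ →+* Mat n := (Rat.castHom ℝ).mapMatrix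

lemma Phi_apply (X : Matrix (Idx n) (Idx n) ℚ) (i j : Idx n) : Phi n X i j = (X i j : ℝ) := rfl

lemma Phi_transpose (X : Matrix (Idx n) (Idx n) ℚ) : (Phi n X)ᵀ = Phi n Xᵀ := by
  simp [Phi, RingHom.mapMatrix_apply, Matrix.transpose_map]

lemma Phi_det (X : Matrix (Idx n) (Idx n) ℚ) : (Phi n X).det = ((X.det : ℚ) : ℝ) :=
  ((Rat.castHom ℝ).map_det X).symm

lemma Phi_inv (X : Matrix (Idx n) (Idx n) ℚ) (h : IsUnit X.det) :
    (Phi n X)⁻¹ = Phi n X⁻¹ :=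
  Matrix.inv_eq_right_inv (by rw [← _root_.map_mul, Matrix.mul_nonsing_inv _ h, _root_.map_one])

def Jq (n : ℕ) : Matrix (Idx n) (Idx n) ℚ := Matrix.fromBlocks 0 1 (-1) 0

lemma Phi_Jq : Phi n (Jq n) = Jm n := by
  ext i j
  rcases i with i | i <;> rcases j with j | j <;>
    simp [Phi_apply, Jq, Jm, Matrix.one_apply, apply_ite]

lemma ham_of_sym {T : Mat n} (hT : Tᵀ = T) :
    (-(Jm n * T))ᵀ * Jm n + Jm n * (-(Jm n * T)) = 0 := by
  have h1 : (-(Jm n * T))ᵀ = T * Jm n := by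
    rw [transpose_neg, transpose_mul, hT, Jm_transpose, Matrix.mul_neg, neg_neg]
  have e2 : T * Jm n * Jm n = -T := by
    rw [Matrix.mul_assoc, Jm_sq, Matrix.mul_neg, Matrix.mul_one]
  have e3 : Jm n * -(Jm n * T) = T := by
    rw [Matrix.mul_neg, ← Matrix.mul_assoc, Jm_sq, Matrix.neg_mul, Matrix.one_mul, neg_neg]
  rw [h1, e2, e3]
  simp

lemma symp_expand {M : Mat n} (hM : M ∈ symp n) :
    (1 - M)ᵀ * Jm n * (1 + M) + (1 + M)ᵀ * Jm n * (1 - M) = 0 := by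
  have h : Mᵀ * Jm n * M = Jm n := hM
  simp only [transpose_sub, transpose_add, transpose_one, Matrix.sub_mul, Matrix.add_mul,
    Matrix.mul_sub, Matrix.mul_add, Matrix.one_mul, Matrix.mul_one]
  rw [h]
  abel

lemma chart_mem_closure {M : Mat n} (hM : M ∈ symp n) (h1 : IsUnit (1 + M).det) :
    M ∈ closure (ratSymp n) := by
  classical
  set u : Mat n := 1 + M with hu_def
  have h1t : IsUnit uᵀ.det := by rw [det_transpose]; exact h1
  set A : Mat n := (1 - M) * u⁻¹ with hA_def
  have hAu : A * u = 1 - M := by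
    rw [hA_def, Matrix.mul_assoc, Matrix.nonsing_inv_mul _ h1, Matrix.mul_one]
  have hAt : uᵀ * Aᵀ = (1 - M)ᵀ := by
    rw [hA_def, transpose_mul, Matrix.transpose_nonsing_inv, ← Matrix.mul_assoc,
      Matrix.mul_nonsing_inv _ h1t, Matrix.one_mul]
  have expand : uᵀ * (Aᵀ * Jm n + Jm n * A) * u
      = (uᵀ * Aᵀ) * Jm n * u + uᵀ * Jm n * (A * u) := by noncomm_ring
  rw [hAt, hAu] at expand
  have hham : Aᵀ * Jm n + Jm n * A = 0 := by
    have e0 : uᵀ * (Aᵀ * Jm n + Jm n * A) * u = 0 := by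
      rw [expand, hu_def]
      exact symp_expand hM
    calc Aᵀ * Jm n + Jm n * A
        = ((uᵀ)⁻¹ * uᵀ) * (Aᵀ * Jm n + Jm n * A) * (u * u⁻¹) := by
          rw [Matrix.nonsing_inv_mul _ h1t, Matrix.mul_nonsing_inv _ h1, Matrix.one_mul,
            Matrix.mul_one]
      _ = (uᵀ)⁻¹ * (uᵀ * (Aᵀ * Jm n + Jm n * A) * u) * u⁻¹ := by noncomm_ring
      _ = 0 := by rw [e0, Matrix.mul_zero, Matrix.zero_mul]
  set S : Mat n := Jm n * A with hS_def
  have hSsym : Sᵀ = S := by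
    rw [hS_def, transpose_mul, Jm_transpose, Matrix.mul_neg,
      show Aᵀ * Jm n = -(Jm n * A) from eq_neg_of_add_eq_zero_left hham, neg_neg]
  have hAS : A = -(Jm n * S) := by
    rw [hS_def, ← Matrix.mul_assoc, Jm_sq]
    simp
  -- rational approximation of S by symmetric rational matrices
  have hqQ : ∀ (k : ℕ) (i j : Idx n), ∃ q : ℚ, |S i j - (q:ℝ)| < 1/(k+1) := fun k i j =>
    exists_rat_near _ (by positivity)
  choose Q hQ using hqQ
  set T : ℕ → Matrix (Idx n) (Idx n) ℚ := fun k => (2⁻¹ : ℚ) • (Matrix.of (Q k) + (Matrix.of (Q k))ᵀ) with hT_def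
  have hTsym : ∀ k, (T k)ᵀ = T k := by
    intro k
    ext i j
    simp [hT_def, Matrix.transpose_apply, Matrix.add_apply, Matrix.smul_apply,
      Matrix.of_apply, add_comm]
  have hent : ∀ (i j : Idx n), Tendsto (fun k => (Q k i j : ℝ)) atTop (𝓝 (S i j)) := by
    intro i j
    have h0 : Tendsto (fun k => (Q k i j : ℝ) - S i j) atTop (𝓝 0) := by
      apply squeeze_zero_norm (fun k => ?_) tendsto_one_div_add_atTop_nhds_zero_nat
      rw [Real.norm_eq_abs, abs_sub_comm]
      exact le_of_lt (hQ k i j)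
    have h2 := h0.add (tendsto_const_nhds (x := S i j))
    simpa using h2
  have hTtend : Tendsto (fun k => Phi n (T k)) atTop (𝓝 S) := by
    refine tendsto_pi_nhds.mpr ?_
    intro i
    rw [tendsto_pi_nhds]
    intro j
    have hentry : ∀ k, Phi n (T k) i j = ((2:ℝ))⁻¹ * ((Q k i j : ℝ) + (Q k j i : ℝ)) := by
      intro k
      rw [Phi_apply]
      simp only [hT_def, Matrix.smul_apply, Matrix.add_apply, Matrix.transpose_apply,
        Matrix.of_apply, smul_eq_mul]
      push_cast
      ring
    have hSij : S i j = (2:ℝ)⁻¹ * (S i j + S j i) := by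
      have hji : S j i = S i j := by
        conv_lhs => rw [show S j i = Sᵀ i j from rfl, hSsym]
      rw [hji]; ring
    simp only [hentry]
    rw [hSij]
    exact ((hent i j).add (hent j i)).const_mul _
  -- the real Hamiltonian sequence
  set Ar : ℕ → Mat n := fun k => Phi n (-(Jq n * T k)) with hAr_def
  have hArJ : ∀ k, Ar k = -(Jm n * Phi n (T k)) := by
    intro k
    rw [hAr_def]
    simp only [_root_.map_neg, _root_.map_mul, Phi_Jq]
  have hArtend : Tendsto Ar atTop (𝓝 A) := by
    have hc : Continuous fun X : Mat n => -(Jm n * X) :=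
      (continuous_const.matrix_mul continuous_id).neg
    have h2 := (hc.tendsto S).comp hTtend
    have h3 : (fun k => -(Jm n * Phi n (T k))) = Ar := by
      funext k; rw [hArJ k]
    rw [show -(Jm n * S) = A from hAS.symm] at h2
    rwa [show ((fun X : Mat n => -(Jm n * X)) ∘ fun k => Phi n (T k)) = Ar from by
      funext k; simp [Function.comp, hArJ k]] at h2
  have hArham : ∀ k, (Ar k)ᵀ * Jm n + Jm n * (Ar k) = 0 := by
    intro k
    rw [hArJ k]
    apply ham_of_sym
    rw [Phi_transpose, hTsym]
  -- identities for the limit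
  have h2M : (1 : Mat n) + M + (1 - M) = (2:ℝ) • 1 := by
    rw [two_smul]; abel
  have h1pA : 1 + A = (2:ℝ) • u⁻¹ := by
    rw [hA_def]
    calc (1:Mat n) + (1 - M) * u⁻¹ = (u + (1 - M)) * u⁻¹ := by
          rw [Matrix.add_mul, Matrix.mul_nonsing_inv _ h1]
      _ = ((2:ℝ) • (1:Mat n)) * u⁻¹ := by
          rw [show u + (1 - M) = (2:ℝ) • (1:Mat n) from by rw [hu_def]; exact h2M]
      _ = (2:ℝ) • u⁻¹ := by rw [smul_mul_assoc, Matrix.one_mul]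
  have h1mA : 1 - A = ((2:ℝ) • M) * u⁻¹ := by
    rw [hA_def]
    calc (1:Mat n) - (1 - M) * u⁻¹ = (u - (1 - M)) * u⁻¹ := by
          rw [Matrix.sub_mul u, Matrix.mul_nonsing_inv _ h1]
      _ = ((2:ℝ) • M) * u⁻¹ := by
          congr 1
          rw [hu_def, two_smul]
          abel
  have hdet1pA : IsUnit (1 + A).det := by
    rw [h1pA, Matrix.det_smul]
    exact (IsUnit.pow _ (isUnit_iff_ne_zero.mpr two_ne_zero)).mul
      (Matrix.isUnit_nonsing_inv_det _ h1)
  have hFA : (1 - A) * (1 + A)⁻¹ = M := by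
    have hinv : (1 + A)⁻¹ = (2:ℝ)⁻¹ • u := by
      apply Matrix.inv_eq_right_inv
      rw [h1pA, smul_mul_assoc, mul_smul_comm, smul_smul, Matrix.nonsing_inv_mul _ h1]
      norm_num
    rw [h1mA, hinv, mul_smul_comm, smul_mul_assoc, smul_mul_assoc, smul_smul,
      Matrix.mul_assoc, Matrix.nonsing_inv_mul _ h1, Matrix.mul_one]
    norm_num
  have hdetA : (1+A).det ≠ 0 := by
    intro h0
    rw [h0] at hdet1pA
    exact not_isUnit_zero hdet1pA
  set F : Mat n → Mat n := fun X => (1 - X) * ((1 + X).det⁻¹ • (1 + X).adjugate) with hF_def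
  have hFeq : ∀ X : Mat n, (1 + X)⁻¹ = (1 + X).det⁻¹ • (1 + X).adjugate := by
    intro X
    rw [Matrix.inv_def, Ring.inverse_eq_inv']
  have hdettend : Tendsto (fun k => (1 + Ar k).det) atTop (𝓝 ((1 + A).det)) :=
    ((continuous_const.add continuous_id).matrix_det.tendsto A).comp hArtend
  have htend2 : Tendsto (fun k => F (Ar k)) atTop (𝓝 (F A)) := by
    have hadj : Tendsto (fun k => (1 + Ar k).adjugate) atTop (𝓝 ((1 + A).adjugate)) :=
      ((continuous_const.add continuous_id).matrix_adjugate.tendsto A).comp hArtend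
    have hsub : Tendsto (fun k => (1:Mat n) - Ar k) atTop (𝓝 (1 - A)) :=
      tendsto_const_nhds.sub hArtend
    exact hsub.mul ((hdettend.inv₀ hdetA).smul hadj)
  have hFA' : F A = M := by
    rw [hF_def]
    dsimp only
    rw [← hFeq, hFA]
  rw [← hFA']
  apply mem_closure_of_tendsto htend2
  filter_upwards [hdettend.eventually_ne hdetA] with k hk
  have hkU : IsUnit (1 + Ar k).det := isUnit_iff_ne_zero.mpr hk
  have hFk : F (Ar k) = (1 - Ar k) * (1 + Ar k)⁻¹ := by
    rw [hF_def]
    dsimp only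
    rw [← hFeq]
  rw [hFk]
  refine ⟨cayley_symp (hArham k) hkU, ?_⟩
  have hQdet : IsUnit (1 + (-(Jq n * T k))).det := by
    rw [isUnit_iff_ne_zero]
    intro h0
    apply hk
    have hmap : Phi n (1 + (-(Jq n * T k))) = 1 + Ar k := by
      rw [_root_.map_add, _root_.map_one, hAr_def]
    rw [← hmap, Phi_det, h0]
    simp
  have hratval : (1 - Ar k) * (1 + Ar k)⁻¹
      = Phi n ((1 - (-(Jq n * T k))) * (1 + (-(Jq n * T k)))⁻¹) := by
    rw [_root_.map_mul, _root_.map_sub, _root_.map_one, ← Phi_inv _ hQdet, _root_.map_add, _root_.map_one, hAr_def]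
  rw [hratval]
  intro i j
  exact ⟨_, (Phi_apply _ i j)⟩

lemma exists_bound {E F : Type*} [NormedAddCommGroup E] [NormedSpace ℝ E]
    [NormedAddCommGroup F] [NormedSpace ℝ F] [FiniteDimensional ℝ E]
    (f : E →ₗ[ℝ] F) : ∃ c : ℝ, 0 ≤ c ∧ ∀ x, ‖f x‖ ≤ c * ‖x‖ :=
  ⟨‖LinearMap.toContinuousLinearMap f‖, norm_nonneg _, fun x => by
    simpa using (LinearMap.toContinuousLinearMap f).le_opNorm x⟩

set_option synthInstance.maxHeartbeats 1000000 in
set_option maxHeartbeats 1000000 in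
lemma exists_antilip {E F : Type*} [NormedAddCommGroup E] [NormedSpace ℝ E]
    [NormedAddCommGroup F] [NormedSpace ℝ F] [FiniteDimensional ℝ E] [FiniteDimensional ℝ F]
    (f : E →ₗ[ℝ] F) (hf : Function.Injective f) :
    ∃ c : ℝ, 0 ≤ c ∧ ∀ x, ‖x‖ ≤ c * ‖f x‖ := by
  set e := LinearEquiv.ofInjective f hf with he_def
  set e' := e.toContinuousLinearEquiv with he'_def
  refine ⟨‖(e'.symm : ↥(LinearMap.range f) →L[ℝ] E)‖, ContinuousLinearMap.opNorm_nonneg _,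
    fun x => ?_⟩
  have h1 : x = e'.symm (e' x) := (e'.symm_apply_apply x).symm
  have h2 : ‖x‖ ≤ ‖(e'.symm : ↥(LinearMap.range f) →L[ℝ] E)‖ * ‖e' x‖ := by
    conv_lhs => rw [h1]
    exact (e'.symm : ↥(LinearMap.range f) →L[ℝ] E).le_opNorm _
  have hcoe : ((e' x : ↥(LinearMap.range f)) : F) = f x := by
    rw [he'_def, show e.toContinuousLinearEquiv x = e x from rfl, he_def]
    exact LinearEquiv.ofInjective_apply f x
  have h3 : ‖e' x‖ = ‖f x‖ := by rw [Submodule.coe_norm, hcoe]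
  rwa [h3] at h2

lemma pencil {m : Type*} [Fintype m] [DecidableEq m] (A B C : Matrix m m ℝ)
    (h : ∀ v : m → ℝ, A *ᵥ v = 0 → B *ᵥ v ∈ LinearMap.range A.mulVecLin → v = 0) :
    ∃ ε > 0, ∀ t : ℝ, t ≠ 0 → |t| < ε → (A + t • B + (t*t) • C).det ≠ 0 := by
  classical
  set K := LinearMap.ker A.mulVecLin with hK_def
  obtain ⟨V, hV⟩ := Submodule.exists_isCompl K
  set W := LinearMap.range A.mulVecLin with hW_def
  obtain ⟨W', hW⟩ := Submodule.exists_isCompl W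
  set π : (m → ℝ) →ₗ[ℝ] (m → ℝ) := W'.subtype ∘ₗ W'.linearProjOfIsCompl W hW.symm with hπ_def
  have hπW : ∀ x ∈ W, π x = 0 := by
    intro x hx
    have : W'.linearProjOfIsCompl W hW.symm x = 0 :=
      (Submodule.linearProjOfIsCompl_apply_eq_zero_iff hW.symm).mpr hx
    simp [hπ_def, this]
  have hπker : ∀ x : m → ℝ, π x = 0 → x ∈ W := by
    intro x hx
    have : W'.linearProjOfIsCompl W hW.symm x = 0 := by
      have := hx
      rw [hπ_def] at this
      exact Subtype.ext_iff.mpr (by simpa using this)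
    exact (Submodule.linearProjOfIsCompl_apply_eq_zero_iff hW.symm).mp this
  set D : K →ₗ[ℝ] (m → ℝ) := π ∘ₗ B.mulVecLin ∘ₗ K.subtype with hD_def
  have hDinj : Function.Injective D := by
    rw [← LinearMap.ker_eq_bot, LinearMap.ker_eq_bot']
    intro k hk
    have hBk : B *ᵥ (k : m → ℝ) ∈ W := by
      apply hπker
      simpa [hD_def, Matrix.mulVecLin_apply] using hk
    have hAk : A *ᵥ (k : m → ℝ) = 0 := by
      have h2 : A.mulVecLin (k : m → ℝ) = 0 := LinearMap.mem_ker.mp k.2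
      rwa [Matrix.mulVecLin_apply] at h2
    exact Subtype.ext (h _ hAk hBk)
  set AV : V →ₗ[ℝ] (m → ℝ) := A.mulVecLin ∘ₗ V.subtype with hAV_def
  have hAVinj : Function.Injective AV := by
    rw [← LinearMap.ker_eq_bot, LinearMap.ker_eq_bot']
    intro v hv
    have hvK : (v : m → ℝ) ∈ K := LinearMap.mem_ker.mpr (by simpa [hAV_def] using hv)
    have : (v : m → ℝ) = 0 := Submodule.disjoint_def.mp hV.disjoint _ hvK v.2
    exact Subtype.ext this
  obtain ⟨cD, hcD0, hcD⟩ := exists_antilip D hDinj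
  obtain ⟨cA, hcA0, hcA⟩ := exists_antilip AV hAVinj
  obtain ⟨bB, hbB0, hbB⟩ := exists_bound B.mulVecLin
  obtain ⟨bC, hbC0, hbC⟩ := exists_bound C.mulVecLin
  obtain ⟨bPB, hbPB0, hbPB⟩ := exists_bound (π ∘ₗ B.mulVecLin)
  obtain ⟨bPC, hbPC0, hbPC⟩ := exists_bound (π ∘ₗ C.mulVecLin)
  set Ctot : ℝ := cD * (bPC + bPB * (cA * (bB + bC))) + cA * (bB + bC) + 1 with hCtot_def
  have hCtot : 0 < Ctot := by positivity
  refine ⟨min 1 (1/Ctot), lt_min one_pos (by positivity), fun t ht htε => ?_⟩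
  intro hdet
  obtain ⟨v, hv0, hveq⟩ := Matrix.exists_mulVec_eq_zero_iff.mpr hdet
  have ht1 : |t| ≤ 1 := le_of_lt (lt_of_lt_of_le htε (min_le_left _ _))
  have htC : |t| * Ctot < 1 := by
    have h2 : |t| < 1 / Ctot := lt_of_lt_of_le htε (min_le_right _ _)
    calc |t| * Ctot < (1/Ctot) * Ctot := by
          apply mul_lt_mul_of_pos_right h2 hCtot
      _ = 1 := by field_simp
  have heq : A *ᵥ v + t • (B *ᵥ v) + (t*t) • (C *ᵥ v) = 0 := by
    rw [← hveq, Matrix.add_mulVec, Matrix.add_mulVec, Matrix.smul_mulVec,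
      Matrix.smul_mulVec]
  set k := K.linearProjOfIsCompl V hV v with hk_def
  set w := V.linearProjOfIsCompl K hV.symm v with hw_def
  have hkw : (k : m → ℝ) + (w : m → ℝ) = v :=
    Submodule.projection_add_projection_eq_self hV v
  have hAk : A *ᵥ (k : m → ℝ) = 0 := by
    have h2 : A.mulVecLin (k : m → ℝ) = 0 := LinearMap.mem_ker.mp k.2
    rwa [Matrix.mulVecLin_apply] at h2
  have hAv : A *ᵥ v = A *ᵥ (w : m → ℝ) := by
    rw [← hkw, Matrix.mulVec_add, hAk, zero_add]
  -- bound on w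
  have hAw_eq : A *ᵥ (w : m → ℝ) = -(t • (B *ᵥ v) + (t*t) • (C *ᵥ v)) := by
    rw [← hAv]
    have h2 : A *ᵥ v + (t • (B *ᵥ v) + (t*t) • (C *ᵥ v)) = 0 := by
      rw [← add_assoc]; exact heq
    exact eq_neg_of_add_eq_zero_left h2
  have hnormAw : ‖A *ᵥ (w : m → ℝ)‖ ≤ |t| * ((bB + bC) * ‖v‖) := by
    rw [hAw_eq, norm_neg]
    calc ‖t • (B *ᵥ v) + (t*t) • (C *ᵥ v)‖
        ≤ ‖t • (B *ᵥ v)‖ + ‖(t*t) • (C *ᵥ v)‖ := norm_add_le _ _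
      _ = |t| * ‖B *ᵥ v‖ + |t*t| * ‖C *ᵥ v‖ := by
          rw [norm_smul, norm_smul, Real.norm_eq_abs, Real.norm_eq_abs]
      _ ≤ |t| * (bB * ‖v‖) + (|t| * 1) * (bC * ‖v‖) := by
          apply add_le_add
          · exact mul_le_mul_of_nonneg_left (by simpa [Matrix.mulVecLin_apply] using hbB v)
              (abs_nonneg t)
          · apply mul_le_mul
            · rw [abs_mul]
              exact mul_le_mul_of_nonneg_left ht1 (abs_nonneg t)
            · simpa [Matrix.mulVecLin_apply] using hbC v
            · exact norm_nonneg _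
            · positivity
      _ = |t| * ((bB + bC) * ‖v‖) := by ring
  have hw_bound : ‖(w : m → ℝ)‖ ≤ cA * (|t| * ((bB + bC) * ‖v‖)) := by
    have h2 : ‖w‖ ≤ cA * ‖AV w‖ := hcA w
    rw [Submodule.coe_norm] at h2  -- ??? direction
    have h3 : ‖AV w‖ = ‖A *ᵥ (w : m → ℝ)‖ := by
      congr 1
    calc ‖(w : m → ℝ)‖ ≤ cA * ‖AV w‖ := h2
      _ = cA * ‖A *ᵥ (w : m → ℝ)‖ := by rw [h3]
      _ ≤ cA * (|t| * ((bB + bC) * ‖v‖)) := mul_le_mul_of_nonneg_left hnormAw hcA0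
  -- π equation
  have hπA : π (A *ᵥ v) = 0 := hπW _ ⟨v, rfl⟩
  have hπeq : t • π (B *ᵥ v) + (t*t) • π (C *ᵥ v) = 0 := by
    have h2 := congrArg π heq
    simpa [_root_.map_add, _root_.map_smul, hπA] using h2
  have hπBv : π (B *ᵥ v) = -(t • π (C *ᵥ v)) := by
    have h2 : t • (π (B *ᵥ v) + t • π (C *ᵥ v)) = 0 := by
      rw [smul_add, smul_smul]
      exact hπeq
    have h3 : π (B *ᵥ v) + t • π (C *ᵥ v) = 0 := by
      rcases smul_eq_zero.mp h2 with h4 | h4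
      · exact absurd h4 ht
      · exact h4
    exact eq_neg_of_add_eq_zero_left h3
  have hπBv_bound : ‖π (B *ᵥ v)‖ ≤ |t| * (bPC * ‖v‖) := by
    rw [hπBv, norm_neg, norm_smul, Real.norm_eq_abs]
    apply mul_le_mul_of_nonneg_left _ (abs_nonneg t)
    simpa [Matrix.mulVecLin_apply] using hbPC v
  -- bound on k
  have hDk : D k = π (B *ᵥ v) - π (B *ᵥ (w : m → ℝ)) := by
    have hkv : (k : m → ℝ) = v - (w : m → ℝ) := by
      rw [← hkw]; abel
    rw [hD_def]
    simp only [LinearMap.coe_comp, Function.comp_apply, Submodule.coe_subtype,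
      Matrix.mulVecLin_apply, hkv, Matrix.mulVec_sub, map_sub]
  have hk_bound : ‖(k : m → ℝ)‖ ≤ cD * (|t| * (bPC * ‖v‖) + bPB * ‖(w : m → ℝ)‖) := by
    have h2 : ‖(k : m → ℝ)‖ ≤ cD * ‖D k‖ := by
      have := hcD k
      rwa [Submodule.coe_norm] at this
    apply le_trans h2
    apply mul_le_mul_of_nonneg_left _ hcD0
    rw [hDk]
    calc ‖π (B *ᵥ v) - π (B *ᵥ (w : m → ℝ))‖
        ≤ ‖π (B *ᵥ v)‖ + ‖π (B *ᵥ (w : m → ℝ))‖ := norm_sub_le _ _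
      _ ≤ |t| * (bPC * ‖v‖) + bPB * ‖(w : m → ℝ)‖ := by
          apply add_le_add hπBv_bound
          simpa [Matrix.mulVecLin_apply] using hbPB (w : m → ℝ)
  -- contradiction
  have hvpos : 0 < ‖v‖ := norm_pos_iff.mpr hv0
  have htpos : 0 < |t| := abs_pos.mpr ht
  have hfinal : ‖v‖ ≤ |t| * (Ctot - 1) * ‖v‖ := by
    have h2 : ‖v‖ ≤ ‖(k : m → ℝ)‖ + ‖(w : m → ℝ)‖ := by
      rw [← hkw]; exact norm_add_le _ _
    have h3 : ‖(k : m → ℝ)‖ + ‖(w : m → ℝ)‖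
        ≤ cD * (|t| * (bPC * ‖v‖) + bPB * (cA * (|t| * ((bB + bC) * ‖v‖))))
          + cA * (|t| * ((bB + bC) * ‖v‖)) := by
      apply add_le_add _ hw_bound
      apply le_trans hk_bound
      apply mul_le_mul_of_nonneg_left _ hcD0
      apply add_le_add_right
      exact mul_le_mul_of_nonneg_left hw_bound hbPB0
    have h4 : cD * (|t| * (bPC * ‖v‖) + bPB * (cA * (|t| * ((bB + bC) * ‖v‖))))
          + cA * (|t| * ((bB + bC) * ‖v‖)) = |t| * (Ctot - 1) * ‖v‖ := by
      rw [hCtot_def]; ring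
    calc ‖v‖ ≤ _ := h2
      _ ≤ _ := h3
      _ = _ := h4
  have hlt : |t| * (Ctot - 1) * ‖v‖ < ‖v‖ := by
    have h2 : |t| * (Ctot - 1) < 1 := by
      have h3 : |t| * (Ctot - 1) ≤ |t| * Ctot - |t| := by
        have : |t| * (Ctot - 1) = |t| * Ctot - |t| := by ring
        linarith [this.le]
      linarith
    calc |t| * (Ctot - 1) * ‖v‖ < 1 * ‖v‖ := by
          apply mul_lt_mul_of_pos_right h2 hvpos
      _ = ‖v‖ := one_mul _
  linarith

lemma circ_mul (x y : ℝ) : (x • (1:Mat n) + y • Jm n) * (x • (1:Mat n) - y • Jm n)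
    = (x*x + y*y) • 1 := by
  have h := Jm_sq (n := n)
  simp only [Matrix.add_mul, Matrix.mul_sub, smul_mul_assoc, mul_smul_comm, smul_smul,
    Matrix.one_mul, Matrix.mul_one, h]
  module

lemma circ_symp {a b : ℝ} (hab : a*a + b*b = 1) : (a • (1:Mat n) + b • Jm n) ∈ symp n := by
  show (a • (1:Mat n) + b • Jm n)ᵀ * Jm n * (a • (1:Mat n) + b • Jm n) = Jm n
  have ht : (a • (1:Mat n) + b • Jm n)ᵀ = a • (1:Mat n) - b • Jm n := by
    rw [transpose_add, transpose_smul, transpose_smul, transpose_one, Jm_transpose, smul_neg,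
      ← sub_eq_add_neg]
  rw [ht]
  have e1 : (a • (1:Mat n) - b • Jm n) * Jm n = a • Jm n + b • (1:Mat n) := by
    rw [Matrix.sub_mul, smul_mul_assoc, smul_mul_assoc, Matrix.one_mul, Jm_sq]
    module
  rw [e1]
  have h := Jm_sq (n := n)
  simp only [Matrix.add_mul, Matrix.mul_add, smul_mul_assoc, mul_smul_comm, smul_smul,
    Matrix.one_mul, Matrix.mul_one, h]
  match_scalars
  · linear_combination hab
  · ring

lemma circ_unit {x y : ℝ} (h : x*x + y*y ≠ 0) : IsUnit (x • (1:Mat n) + y • Jm n).det := by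
  apply Matrix.isUnit_det_of_right_inverse (B := (x*x+y*y)⁻¹ • (x • (1:Mat n) - y • Jm n))
  rw [mul_smul_comm, circ_mul, smul_smul, inv_mul_cancel₀ h, one_smul]

lemma symp_pencil_hyp {M : Mat n} (hM : M ∈ symp n) :
    ∀ v : Idx n → ℝ, (1 + M) *ᵥ v = 0 →
      ((2:ℝ) • Jm n) *ᵥ v ∈ LinearMap.range (1 + M).mulVecLin → v = 0 := by
  intro v hv hrange
  obtain ⟨u, hu⟩ := hrange
  have hMv : M *ᵥ v = -v := by
    have h2 : v + M *ᵥ v = 0 := by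
      have h3 := hv
      rwa [Matrix.add_mulVec, Matrix.one_mulVec] at h3
    exact eq_neg_of_add_eq_zero_right h2
  have h2 : Mᵀ *ᵥ (Jm n *ᵥ (M *ᵥ v)) = Jm n *ᵥ v := by
    rw [Matrix.mulVec_mulVec, Matrix.mulVec_mulVec,
      show Mᵀ * Jm n * M = Jm n from hM]
  rw [hMv, Matrix.mulVec_neg, Matrix.mulVec_neg] at h2
  have hMtJ : Mᵀ *ᵥ (Jm n *ᵥ v) = -(Jm n *ᵥ v) := neg_eq_iff_eq_neg.mp h2
  have hperp : (1 + M)ᵀ *ᵥ (Jm n *ᵥ v) = 0 := by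
    rw [transpose_add, transpose_one, Matrix.add_mulVec, Matrix.one_mulVec, hMtJ]
    simp
  have h3 : Jm n *ᵥ v = (1 + M) *ᵥ ((2:ℝ)⁻¹ • u) := by
    have h4 : (1 + M) *ᵥ u = (2:ℝ) • (Jm n *ᵥ v) := by
      rw [← Matrix.mulVecLin_apply, hu, Matrix.smul_mulVec]
    rw [Matrix.mulVec_smul, h4, smul_smul]
    norm_num
  have hww : (Jm n *ᵥ v) ⬝ᵥ (Jm n *ᵥ v) = 0 := by
    have h5 := congrArg (fun z => (Jm n *ᵥ v) ⬝ᵥ z) h3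
    rw [h5, Matrix.dotProduct_mulVec,
      show (Jm n *ᵥ v) ᵥ* (1 + M) = (1 + M)ᵀ *ᵥ (Jm n *ᵥ v) from by
        rw [← Matrix.transpose_transpose (1 + M), Matrix.vecMul_transpose,
          Matrix.transpose_transpose],
      hperp, zero_dotProduct]
  have hw0 : Jm n *ᵥ v = 0 := dotProduct_self_eq_zero.mp hww
  have h6 : Jm n *ᵥ (Jm n *ᵥ v) = -v := by
    rw [Matrix.mulVec_mulVec, Jm_sq, Matrix.neg_mulVec, Matrix.one_mulVec]
  rw [hw0, Matrix.mulVec_zero] at h6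
  exact neg_eq_zero.mp h6.symm

lemma mem_closure_of_symp {M : Mat n} (hM : M ∈ symp n) : M ∈ closure (ratSymp n) := by
  obtain ⟨ε, hε, hpen⟩ := pencil (1 + M) ((2:ℝ) • Jm n) (M - 1) (symp_pencil_hyp hM)
  have htmin : 0 < min ε 1 := lt_min hε one_pos
  set t : ℝ := min ε 1 / 2 with ht_def
  have ht0 : 0 < t := half_pos htmin
  have htε : |t| < ε := by
    rw [abs_of_pos ht0, ht_def]
    calc min ε 1 / 2 < min ε 1 := half_lt_self htmin
      _ ≤ ε := min_le_left _ _
  have hq := hpen t (ne_of_gt ht0) htε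
  set d : ℝ := 1 + t*t with hd_def
  have hd0 : 0 < d := by positivity
  have hdne : d ≠ 0 := ne_of_gt hd0
  set a : ℝ := (1 - t*t)/d with ha_def
  set b : ℝ := (2*t)/d with hb_def
  have hab : a*a + b*b = 1 := by
    rw [ha_def, hb_def, hd_def]
    field_simp
    ring
  set g : Mat n := a • (1:Mat n) + b • Jm n with hg_def
  have hgsymp : g ∈ symp n := circ_symp hab
  have hg'symp : (a • (1:Mat n) + (-b) • Jm n) ∈ symp n :=
    circ_symp (by linear_combination hab)
  set h : Mat n := (a • (1:Mat n) + (-b) • Jm n) * M with hh_def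
  have hgg' : g * (a • (1:Mat n) + (-b) • Jm n) = 1 := by
    rw [hg_def, show a • (1:Mat n) + (-b) • Jm n = a • (1:Mat n) - b • Jm n from by
      rw [neg_smul, ← sub_eq_add_neg]]
    rw [circ_mul, hab, one_smul]
  have hgh : g * h = M := by
    rw [hh_def, ← Matrix.mul_assoc, hgg', Matrix.one_mul]
  have hhsymp : h ∈ symp n := symp_mul hg'symp hM
  have hdetg : IsUnit g.det := by
    rw [hg_def]
    exact circ_unit (by rw [hab]; norm_num)
  have ha1 : 0 < 1 + a := by
    have e : 1 + a = 2/d := by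
      rw [ha_def, hd_def]
      field_simp
      ring
    rw [e]
    positivity
  have h1g : IsUnit (1 + g).det := by
    have e : (1:Mat n) + g = (1+a) • (1:Mat n) + b • Jm n := by rw [hg_def]; module
    rw [e]
    apply circ_unit
    nlinarith [mul_self_nonneg b]
  have hgM : d • (g + M) = (1 + M) + t • ((2:ℝ) • Jm n) + (t*t) • (M - 1) := by
    rw [hg_def, ha_def, hb_def]
    match_scalars <;> field_simp <;> ring
  have hdgM : (g + M).det ≠ 0 := by
    intro h0
    apply hq
    have h2 : ((1 + M) + t • ((2:ℝ) • Jm n) + (t*t) • (M - 1)).det = 0 := by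
      rw [← hgM, Matrix.det_smul, h0, mul_zero]
    exact h2
  have h1h : IsUnit (1 + h).det := by
    have e : g * (1 + h) = g + M := by rw [Matrix.mul_add, Matrix.mul_one, hgh]
    have e2 : g.det * (1 + h).det = (g + M).det := by rw [← det_mul, e]
    rw [isUnit_iff_ne_zero]
    intro h0
    rw [h0, mul_zero] at e2
    exact hdgM e2.symm
  rw [← hgh]
  exact closure_mul (chart_mem_closure hgsymp h1g) (chart_mem_closure hhsymp h1h)

theorem closure_ratSymp : closure (ratSymp n) = symp n := by
  apply Set.Subset.antisymm
  · exact closure_minimal (fun M hM => hM.1) symp_isClosed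
  · intro M hM
    exact mem_closure_of_symp hM

end SympDense

open Matrix

/-- `Sp(2n, ℚ)` is dense in `Sp(2n, ℝ)`: every real symplectic matrix is a limit of
rational symplectic matrices, i.e. the closure of the set of rational points of the
real symplectic group is the whole real symplectic group. -/
theorem symplectic_rational_dense (n : ℕ) :
    let J : Matrix (Fin n ⊕ Fin n) (Fin n ⊕ Fin n) ℝ :=
      Matrix.fromBlocks 0 1 (-1) 0
    closure {M : Matrix (Fin n ⊕ Fin n) (Fin n ⊕ Fin n) ℝ |
        Mᵀ * J * M = J ∧ ∀ i j, ∃ q : ℚ, M i j = (q : ℝ)}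
      = {M : Matrix (Fin n ⊕ Fin n) (Fin n ⊕ Fin n) ℝ | Mᵀ * J * M = J} := by
  intro J
  exact SympDense.closure_ratSymp (n := n)
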